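/- Let N_1,...,N_d be n×n Hermitian matrices with N_1+...+N_d = I_n and each N_i ⪰ 0. If for each j = 1,...,d the matrix ∑_{i≠j} N_i has nontrivial kernel, then there is a unitary U with U*N_iU = diag(E_ii, Ñ_i) with Ñ_i ⪰ 0, where E_ii are d×d matrix units. -/

import Mathlib

open ComplexOrder Matrix BigOperators

set_option maxHeartbeats 1000000


private lemma aux_sum_mulVec {n' ι : Type*} [Fintype n'] (s : Finset ι)
    (f : ι → Matrix n' n' ℂ) (x : n' → ℂ) :
    (∑ i ∈ s, f i) *ᵥ x = ∑ i ∈ s, f i *ᵥ x := by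
  ext k
  simp only [Matrix.mulVec, dotProduct, Finset.sum_apply, Matrix.sum_apply,
    Finset.sum_mul]
  rw [Finset.sum_comm]

private lemma aux_dotProduct_sum {n' ι : Type*} [Fintype n'] (s : Finset ι)
    (a : n' → ℂ) (g : ι → n' → ℂ) :
    a ⬝ᵥ (∑ i ∈ s, g i) = ∑ i ∈ s, a ⬝ᵥ g i := by
  simp only [dotProduct, Finset.sum_apply, Finset.mul_sum]
  rw [Finset.sum_comm]

theorem stmt2 (d m : ℕ) (N : Fin d → Matrix (Fin d ⊕ Fin m) (Fin d ⊕ Fin m) ℂ)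
    (hpsd : ∀ i, (N i).PosSemidef) (hSum : ∑ i, N i = 1)
    (hker : ∀ j, ∃ v : Fin d ⊕ Fin m → ℂ, v ≠ 0 ∧
      (∑ i ∈ Finset.univ.erase j, N i).mulVec v = 0) :
    ∃ U ∈ Matrix.unitaryGroup (Fin d ⊕ Fin m) ℂ,
      ∃ Nt : Fin d → Matrix (Fin m) (Fin m) ℂ,
        (∀ i, (Nt i).PosSemidef) ∧
        ∀ i, star U * N i * U =
          Matrix.fromBlocks (Matrix.single i i 1) 0 0 (Nt i) := by
  classical
  -- Step 1: eigenvectors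
  have key : ∀ j, ∃ v : Fin d ⊕ Fin m → ℂ, v ≠ 0 ∧
      (∀ i, N i *ᵥ v = if i = j then v else 0) := by
    intro j
    obtain ⟨v, hv0, hv⟩ := hker j
    have hzero : ∀ i ∈ Finset.univ.erase j, N i *ᵥ v = 0 := by
      have hsum0 : ∑ i ∈ Finset.univ.erase j, star v ⬝ᵥ N i *ᵥ v = 0 := by
        have h : star v ⬝ᵥ (∑ i ∈ Finset.univ.erase j, N i) *ᵥ v = 0 := by
          rw [hv, dotProduct_zero]
        rwa [aux_sum_mulVec, aux_dotProduct_sum] at h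
      intro i hi
      have h0 : star v ⬝ᵥ N i *ᵥ v = 0 :=
        (Finset.sum_eq_zero_iff_of_nonneg (fun i _ => (hpsd i).dotProduct_mulVec_nonneg v)).mp hsum0 i hi
      exact ((hpsd i).dotProduct_mulVec_zero_iff v).mp h0
    refine ⟨v, hv0, fun i => ?_⟩
    by_cases hij : i = j
    · subst hij
      have h1 : N i *ᵥ v + ∑ k ∈ Finset.univ.erase i, N k *ᵥ v = ∑ k, N k *ᵥ v :=
        Finset.add_sum_erase _ (fun k => N k *ᵥ v) (Finset.mem_univ i)
      have h2 : ∑ k, N k *ᵥ v = v := by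
        rw [← aux_sum_mulVec, hSum, Matrix.one_mulVec]
      have h3 : ∑ k ∈ Finset.univ.erase i, N k *ᵥ v = 0 := by
        rw [← aux_sum_mulVec]; exact hv
      rw [h3, add_zero, h2] at h1
      simpa using h1
    · simp only [hij, if_false]
      exact hzero i (Finset.mem_erase.mpr ⟨hij, Finset.mem_univ i⟩)
  choose v hv0 hvv using key
  -- orthogonality in dot-product form
  have horth : ∀ i j, i ≠ j → star (v i) ⬝ᵥ v j = 0 := by
    intro i j hij
    have h1 : v j = N j *ᵥ v j := by simpa using (hvv j j).symm
    have h2 : N j *ᵥ v i = 0 := by simpa [(Ne.symm hij : j ≠ i)] using hvv i j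
    have h3 : star (v i) ᵥ* N j = 0 := by
      have := congrArg star h2
      rwa [Matrix.star_mulVec, (hpsd j).1.eq, star_zero] at this
    rw [h1, dotProduct_mulVec, h3, zero_dotProduct]
  -- Euclidean space setup
  set E := EuclideanSpace ℂ (Fin d ⊕ Fin m) with hE
  have inner_eq : ∀ (a b : (Fin d ⊕ Fin m) → ℂ),
      (inner ℂ ((WithLp.equiv 2 _).symm a) ((WithLp.equiv 2 _).symm b) : ℂ) = star a ⬝ᵥ b := by
    intro a b
    simp [PiLp.inner_apply, RCLike.inner_apply, dotProduct, WithLp.equiv_symm_apply, mul_comm]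
  set vE : Fin d → E := fun j => (WithLp.equiv 2 _).symm (v j) with hvE
  have hvE0 : ∀ j, vE j ≠ 0 := by
    intro j h
    exact hv0 j (by simpa [hvE] using congrArg (WithLp.equiv 2 _) h)
  set uE : Fin d → E := fun j => ((‖vE j‖ : ℂ))⁻¹ • vE j with huE
  have hnorm : ∀ j, (inner ℂ (vE j) (vE j) : ℂ) = (‖vE j‖ : ℂ) ^ 2 := by
    intro j; exact inner_self_eq_norm_sq_to_K (vE j)
  have huE_inner : ∀ i j, (inner ℂ (uE i) (uE j) : ℂ) = if i = j then 1 else 0 := by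
    intro i j
    rcases eq_or_ne i j with rfl | hij
    · simp only [huE, inner_smul_left, inner_smul_right, if_pos rfl]
      rw [hnorm i]
      simp only [map_inv₀, Complex.conj_ofReal, if_true]
      have h0 : (‖vE i‖ : ℂ) ≠ 0 := by
        exact_mod_cast norm_ne_zero_iff.mpr (hvE0 i)
      field_simp
    · simp only [huE, inner_smul_left, inner_smul_right, if_neg hij]
      rw [hvE, inner_eq, horth i j hij]
      ring
  -- extend to an orthonormal basis
  have hcard : Module.finrank ℂ E = Fintype.card (Fin d ⊕ Fin m) := finrank_euclideanSpace
  have hON : Orthonormal ℂ ((Set.range (Sum.inl : Fin d → Fin d ⊕ Fin m)).restrict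
      (Sum.elim uE (0 : Fin m → E))) := by
    rw [orthonormal_iff_ite]
    rintro ⟨_, ha⟩ ⟨_, hb⟩; obtain ⟨a, rfl⟩ := Set.mem_range.mp ha; obtain ⟨b, rfl⟩ := Set.mem_range.mp hb
    show inner ℂ (uE a) (uE b) = _
    rw [huE_inner a b]
    by_cases hab : a = b
    · subst hab; simp
    · simp [hab, Subtype.ext_iff, Sum.inl.injEq]
  obtain ⟨bb, hbb⟩ := hON.exists_orthonormalBasis_extension_of_card_eq hcard
  have hbb' : ∀ j, bb (Sum.inl j) = uE j := fun j =>
    hbb (Sum.inl j) (Set.mem_range_self j)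
  -- the matrix U
  set w : (Fin d ⊕ Fin m) → (Fin d ⊕ Fin m) → ℂ := fun a => WithLp.equiv 2 _ (bb a) with hw
  set U : Matrix (Fin d ⊕ Fin m) (Fin d ⊕ Fin m) ℂ := Matrix.of fun x a => w a x with hU
  have dot_w : ∀ a a', star (w a) ⬝ᵥ w a' = if a = a' then 1 else 0 := by
    intro a a'
    have h := (orthonormal_iff_ite.mp bb.orthonormal) a a'
    have h2 : (inner ℂ (bb a) (bb a') : ℂ) = star (w a) ⬝ᵥ w a' := by
      have h3 := inner_eq (w a) (w a')
      rwa [show (WithLp.equiv 2 _).symm (w a) = bb a from Equiv.symm_apply_apply _ _,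
        show (WithLp.equiv 2 _).symm (w a') = bb a' from Equiv.symm_apply_apply _ _] at h3
    rw [← h2, h]
  have weig : ∀ i j, N i *ᵥ w (Sum.inl j) = if i = j then w (Sum.inl j) else 0 := by
    intro i j
    have h1 : w (Sum.inl j) = ((‖vE j‖ : ℂ))⁻¹ • v j := by
      simp only [hw, hbb' j, huE]
      rw [WithLp.equiv_apply, WithLp.ofLp_smul]
      congr 1
    rw [h1, Matrix.mulVec_smul, hvv j i]
    split_ifs <;> simp
  have hMeq : ∀ i a b', (star U * N i * U) a b' = star (w a) ⬝ᵥ (N i *ᵥ w b') := by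
    intro i a b'
    simp only [Matrix.mul_apply, Matrix.star_apply, hU, Matrix.of_apply, dotProduct,
      Matrix.mulVec, Finset.sum_mul, Finset.mul_sum]
    rw [Finset.sum_comm]
    refine Finset.sum_congr rfl fun x _ => Finset.sum_congr rfl fun y _ => by
      simp [dotProduct]; ring
  have hcol : ∀ i a j, (star U * N i * U) a (Sum.inl j) =
      if i = j then (if a = Sum.inl j then 1 else 0) else 0 := by
    intro i a j
    rw [hMeq, weig]
    by_cases h : i = j
    · simp only [if_pos h, dot_w]
    · simp only [if_neg h, Matrix.mulVec_zero, dotProduct_zero]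
  have hPSD : ∀ i, (star U * N i * U).PosSemidef := by
    intro i
    rw [Matrix.star_eq_conjTranspose]
    exact (hpsd i).conjTranspose_mul_mul_same U
  refine ⟨U, ?_, fun i => (star U * N i * U).submatrix Sum.inr Sum.inr,
    fun i => (hPSD i).submatrix Sum.inr, fun i => ?_⟩
  · rw [Matrix.mem_unitaryGroup_iff']
    ext a b
    simp only [Matrix.mul_apply, Matrix.star_apply, hU, Matrix.of_apply]
    have hd := dot_w a b
    simp only [dotProduct, Pi.star_apply] at hd
    rw [hd, Matrix.one_apply]
  · ext a b
    rcases a with ja | ka <;> rcases b with jb | kb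
    · rw [Matrix.fromBlocks_apply₁₁, hcol]
      rcases eq_or_ne ja jb with rfl | h2
      · rcases eq_or_ne i ja with rfl | h1
        · simp [Matrix.single, Matrix.of_apply]
        · simp [Matrix.single, Matrix.of_apply, h1]
      · have h3 : (Sum.inl ja : Fin d ⊕ Fin m) ≠ Sum.inl jb := by simp [h2]
        rcases eq_or_ne i jb with rfl | h1
        · simp [Matrix.single, Matrix.of_apply, h3, Ne.symm h2]
        · simp [Matrix.single, Matrix.of_apply, h1]
    · rw [Matrix.fromBlocks_apply₁₂]
      have h4 : (star U * N i * U) (Sum.inr kb) (Sum.inl ja) = 0 := by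
        rw [hcol]; simp
      rw [← (hPSD i).1.apply (Sum.inl ja) (Sum.inr kb), h4, star_zero]
      rfl
    · rw [Matrix.fromBlocks_apply₂₁, hcol]
      simp
    · rfl
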